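/- Let A ⊆ ℕ. (1) If 𝔉 is a syndetic, idempotent filter with A ∈ 𝔉, then the set B := A ∩ (A − 𝔉) satisfies: for every finite subset F ⊆ B, the set B ∩ ⋂_{f ∈ F} (B − f) is syndetic. (2) Conversely, if A satisfies that for every finite subset F ⊆ A the set A ∩ ⋂_{f ∈ F} (A − f) is syndetic, then the upward closure of the collection {A ∩ ⋂_{f ∈ F} (A − f) | F ⊆ A finite} is a syndetic, idempotent filter containing A. In particular, A belongs to a syndetic, idempotent filter if and only if some subset B ⊆ A satisfies: for every finite F ⊆ B, the set B ∩ ⋂_{f ∈ F} (B − f) is syndetic. -/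
import Mathlib


open Set

/-- `A − n` computed inside the positive integers. -/
def shiftN (A : Set ℕ+) (n : ℕ+) : Set ℕ+ := {m : ℕ+ | m + n ∈ A}

/-- `A − B := ⋃_{b ∈ B} (A − b)`. -/
def shiftSet (A B : Set ℕ+) : Set ℕ+ := ⋃ b ∈ B, shiftN A b

/-- A set of positive integers is syndetic if `A ∪ (A−1) ∪ ⋯ ∪ (A−N) = ℕ` for some `N`. -/
def Syndetic (A : Set ℕ+) : Prop :=
  ∃ N : ℕ+, (A ∪ ⋃ k ∈ {k : ℕ+ | k ≤ N}, shiftN A k) = Set.univ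

/-- A set of positive integers is thick if it contains a translate of every finite set. -/
def Thick (A : Set ℕ+) : Prop :=
  ∀ F : Finset ℕ+, ∃ n : ℕ+, ∀ f ∈ F, f + n ∈ A

/-- Piecewise syndetic: some finite union of translates `A ∪ (A−1) ∪ ⋯ ∪ (A−N)` is thick. -/
def PiecewiseSyndetic (A : Set ℕ+) : Prop :=
  ∃ N : ℕ+, Thick (A ∪ ⋃ k ∈ {k : ℕ+ | k ≤ N}, shiftN A k)

/-- A self-map of a topological space is minimal if every forward orbit
`{T^n x | n ∈ ℕ, n ≥ 1}` is dense. -/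
def MinimalMap {X : Type} [TopologicalSpace X] (T : X → X) : Prop :=
  ∀ x : X, Dense (Set.range fun n : ℕ+ => T^[(n : ℕ)] x)

/-- A minimal topological dynamical system: a nonempty compact metric space together with a
continuous map all of whose forward orbits are dense. -/
structure MinSystem : Type 1 where
  X : Type
  [met : MetricSpace X]
  [cpt : CompactSpace X]
  [nem : Nonempty X]
  T : X → X
  cont : Continuous T
  minimal : MinimalMap T

attribute [instance] MinSystem.met MinSystem.cpt MinSystem.nem

/-- `R(x,U)`: the set of (positive) return times of `x` to `U`. -/
def retTimes {X : Type} (T : X → X) (x : X) (U : Set X) : Set ℕ+ :=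
  {n : ℕ+ | T^[(n : ℕ)] x ∈ U}

/-- Dynamically syndetic sets. -/
def DynSyndetic (A : Set ℕ+) : Prop :=
  ∃ (S : MinSystem) (x : S.X) (U : Set S.X),
    IsOpen U ∧ U.Nonempty ∧ retTimes S.T x U ⊆ A

/-- Dynamically central syndetic sets. -/
def DynCentralSyndetic (A : Set ℕ+) : Prop :=
  ∃ (S : MinSystem) (x : S.X) (U : Set S.X),
    IsOpen U ∧ x ∈ U ∧ retTimes S.T x U ⊆ A

/-- Dynamically thick sets: `{T^n x | n ∈ A}` is dense for every minimal system and point. -/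
def DynThick (A : Set ℕ+) : Prop :=
  ∀ (S : MinSystem) (x : S.X), Dense ((fun n : ℕ+ => S.T^[(n : ℕ)] x) '' A)

/-- Sets of (minimal topological) pointwise recurrence. -/
def PointwiseRecurrent (A : Set ℕ+) : Prop :=
  ∀ (S : MinSystem) (x : S.X) (U : Set S.X), IsOpen U → x ∈ U →
    ∃ a ∈ A, S.T^[(a : ℕ)] x ∈ U

/-- A family: an upward-closed collection of subsets of the positive integers. -/
def UpwardClosed (F : Set (Set ℕ+)) : Prop :=
  ∀ ⦃A B : Set ℕ+⦄, A ∈ F → A ⊆ B → B ∈ F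

/-- A filter (in the combinatorial sense): an upward-closed collection closed under
finite intersections. -/
def IsFilterFamily (F : Set (Set ℕ+)) : Prop :=
  UpwardClosed F ∧ ∀ ⦃A B : Set ℕ+⦄, A ∈ F → B ∈ F → A ∩ B ∈ F

/-- A family all of whose members are syndetic. -/
def SyndeticFamily (F : Set (Set ℕ+)) : Prop := ∀ A ∈ F, Syndetic A

/-- `A − 𝔉 := {n | A − n ∈ 𝔉}`. -/
def famShift (A : Set ℕ+) (F : Set (Set ℕ+)) : Set ℕ+ := {n : ℕ+ | shiftN A n ∈ F}

/-- `𝔉 + 𝔊 := {A | A − 𝔊 ∈ 𝔉}`. -/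
def famSum (F G : Set (Set ℕ+)) : Set (Set ℕ+) := {A : Set ℕ+ | famShift A G ∈ F}

/-- A family is idempotent if `𝔉 ⊆ 𝔉 + 𝔉`. -/
def IdempotentFamily (F : Set (Set ℕ+)) : Prop := F ⊆ famSum F F

/-- A proper family: nonempty and not containing the empty set. -/
def ProperFamily (F : Set (Set ℕ+)) : Prop := F.Nonempty ∧ ∅ ∉ F

/-- The upward closure of a collection of subsets of `ℕ`. -/
def upClose (C : Set (Set ℕ+)) : Set (Set ℕ+) := {B | ∃ A ∈ C, A ⊆ B}

/-- The combinatorial condition: for every finite `F ⊆ B`, the set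
`B ∩ ⋂_{f ∈ F} (B − f)` is syndetic. -/
def CombCond (B : Set ℕ+) : Prop :=
  ∀ F : Finset ℕ+, (F : Set ℕ+) ⊆ B → Syndetic (B ∩ ⋂ f ∈ F, shiftN B f)

/-- The upward closure of `{A ∩ ⋂_{f ∈ F} (A − f) | F ⊆ A finite}`. -/
def genFam (A : Set ℕ+) : Set (Set ℕ+) :=
  upClose {S | ∃ F : Finset ℕ+, (F : Set ℕ+) ⊆ A ∧ S = A ∩ ⋂ f ∈ F, shiftN A f}

-- auxiliary lemmas
lemma shiftN_mono {A B : Set ℕ+} (h : A ⊆ B) (n : ℕ+) : shiftN A n ⊆ shiftN B n :=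
  fun _ hm => h hm

lemma syndetic_mono {A B : Set ℕ+} (h : A ⊆ B) (hA : Syndetic A) : Syndetic B := by
  obtain ⟨N, hN⟩ := hA
  refine ⟨N, Set.eq_univ_of_univ_subset ?_⟩
  rw [← hN]
  exact Set.union_subset_union h (Set.iUnion₂_mono fun k _ => shiftN_mono h k)

lemma filter_biInter {𝓕 : Set (Set ℕ+)} (h : IsFilterFamily 𝓕) {B : Set ℕ+} (hB : B ∈ 𝓕)
    (g : ℕ+ → Set ℕ+) (F : Finset ℕ+) (hg : ∀ f ∈ F, g f ∈ 𝓕) :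
    (B ∩ ⋂ f ∈ F, g f) ∈ 𝓕 := by
  classical
  induction F using Finset.induction with
  | empty => simpa using hB
  | @insert a F ha ih =>
    have h1 : (B ∩ ⋂ f ∈ F, g f) ∩ g a ∈ 𝓕 :=
      h.2 (ih fun f hf => hg f (Finset.mem_insert_of_mem hf)) (hg a (Finset.mem_insert_self a F))
    have he : (B ∩ ⋂ f ∈ insert a F, g f) = (B ∩ ⋂ f ∈ F, g f) ∩ g a := by
      ext x; simp [Finset.mem_insert]; tauto
    rw [he]; exact h1

lemma shiftN_shiftN (A : Set ℕ+) (m f : ℕ+) :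
    shiftN (shiftN A f) m = shiftN A (m + f) := by
  ext k; simp only [shiftN, Set.mem_setOf_eq, add_assoc]

lemma combCond_aux (A : Set ℕ+) (hC : CombCond A) :
    IsFilterFamily (genFam A) ∧ SyndeticFamily (genFam A) ∧
      IdempotentFamily (genFam A) ∧ A ∈ genFam A := by
  classical
  have hup : UpwardClosed (genFam A) := by
    rintro C D ⟨T, hT, hTC⟩ hCD
    exact ⟨T, hT, hTC.trans hCD⟩
  refine ⟨⟨hup, ?_⟩, ?_, ?_, ?_⟩
  · -- closed under intersections
    rintro C D ⟨T, ⟨F, hFA, rfl⟩, hTC⟩ ⟨S, ⟨G, hGA, rfl⟩, hSD⟩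
    refine ⟨A ∩ ⋂ f ∈ F ∪ G, shiftN A f, ⟨F ∪ G, ?_, rfl⟩, ?_⟩
    · rw [Finset.coe_union]; exact Set.union_subset hFA hGA
    · intro m hm
      simp only [Set.mem_inter_iff, Set.mem_iInter, Finset.mem_union] at hm
      exact ⟨hTC ⟨hm.1, Set.mem_iInter₂.2 fun f hf => hm.2 f (Or.inl hf)⟩,
        hSD ⟨hm.1, Set.mem_iInter₂.2 fun f hf => hm.2 f (Or.inr hf)⟩⟩
  · -- syndetic
    rintro C ⟨T, ⟨F, hFA, rfl⟩, hTC⟩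
    exact syndetic_mono hTC (hC F hFA)
  · -- idempotent
    rintro C ⟨T, ⟨F, hFA, rfl⟩, hTC⟩
    show famShift C (genFam A) ∈ genFam A
    refine ⟨A ∩ ⋂ f ∈ F, shiftN A f, ⟨F, hFA, rfl⟩, ?_⟩
    intro n hn
    have hnA : n ∈ A := hn.1
    have hnF : ∀ f ∈ F, n + f ∈ A := fun f hf => Set.mem_iInter₂.1 hn.2 f hf
    set G : Finset ℕ+ := insert n F ∪ F.image (· + n) with hGdef
    have hGA : (G : Set ℕ+) ⊆ A := by
      intro x hx
      simp only [hGdef, Finset.coe_union, Finset.coe_insert, Finset.coe_image,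
        Set.mem_union, Set.mem_insert_iff, Set.mem_image, Finset.mem_coe] at hx
      rcases hx with (rfl | hx) | ⟨f, hf, rfl⟩
      · exact hnA
      · exact hFA hx
      · rw [add_comm]; exact hnF f hf
    show shiftN C n ∈ genFam A
    refine ⟨A ∩ ⋂ f ∈ G, shiftN A f, ⟨G, hGA, rfl⟩, ?_⟩
    intro m hm
    have hmA : m ∈ A := hm.1
    have hmG : ∀ f ∈ G, m + f ∈ A := fun f hf => Set.mem_iInter₂.1 hm.2 f hf
    have h1 : m + n ∈ A := hmG n (by simp [hGdef])
    have h2 : ∀ f ∈ F, (m + n) + f ∈ A := by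
      intro f hf
      have hmem : m + (f + n) ∈ A := hmG (f + n) (by
        simp only [hGdef, Finset.mem_union, Finset.mem_image]
        exact Or.inr ⟨f, hf, rfl⟩)
      have he : (m + n) + f = m + (f + n) := by
        rw [add_assoc, add_comm n f]
      rwa [he]
    have hmn : m + n ∈ A ∩ ⋂ f ∈ F, shiftN A f :=
      ⟨h1, Set.mem_iInter₂.2 fun f hf => h2 f hf⟩
    exact hTC hmn
  · -- A ∈ genFam A
    exact ⟨A ∩ ⋂ f ∈ (∅ : Finset ℕ+), shiftN A f, ⟨∅, by simp, rfl⟩,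
      Set.inter_subset_left⟩
theorem combCond_syndetic_idempotent_filter (A : Set ℕ+) :
    (∀ 𝓕 : Set (Set ℕ+), IsFilterFamily 𝓕 → SyndeticFamily 𝓕 → IdempotentFamily 𝓕 →
      A ∈ 𝓕 → CombCond (A ∩ famShift A 𝓕)) ∧
    (CombCond A →
      IsFilterFamily (genFam A) ∧ SyndeticFamily (genFam A) ∧
        IdempotentFamily (genFam A) ∧ A ∈ genFam A) ∧
    ((∃ 𝓕 : Set (Set ℕ+), IsFilterFamily 𝓕 ∧ SyndeticFamily 𝓕 ∧ IdempotentFamily 𝓕 ∧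
        A ∈ 𝓕) ↔
      ∃ B : Set ℕ+, B ⊆ A ∧ CombCond B) := by
  classical
  have part1 : ∀ 𝓕 : Set (Set ℕ+), IsFilterFamily 𝓕 → SyndeticFamily 𝓕 → IdempotentFamily 𝓕 →
      A ∈ 𝓕 → CombCond (A ∩ famShift A 𝓕) := by
    intro 𝓕 hFil hSyn hIdem hA F hF
    set B := A ∩ famShift A 𝓕 with hBdef
    have hAs : famShift A 𝓕 ∈ 𝓕 := hIdem hA
    have hBmem : B ∈ 𝓕 := hFil.2 hA hAs
    have hshift : ∀ f ∈ F, shiftN B f ∈ 𝓕 := by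
      intro f hf
      have hfB : f ∈ B := hF hf
      have h1 : shiftN A f ∈ 𝓕 := hfB.2
      have h2 : shiftN (famShift A 𝓕) f = famShift (shiftN A f) 𝓕 := by
        ext m
        simp only [shiftN, famShift, Set.mem_setOf_eq, add_assoc]
      have h3 : shiftN (famShift A 𝓕) f ∈ 𝓕 := by
        rw [h2]; exact hIdem h1
      have h4 : shiftN B f = shiftN A f ∩ shiftN (famShift A 𝓕) f := rfl
      rw [h4]; exact hFil.2 h1 h3
    exact hSyn _ (filter_biInter hFil hBmem (shiftN B) F hshift)
  refine ⟨part1, combCond_aux A, ?_, ?_⟩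
  · rintro ⟨𝓕, h1, h2, h3, h4⟩
    exact ⟨A ∩ famShift A 𝓕, Set.inter_subset_left, part1 𝓕 h1 h2 h3 h4⟩
  · rintro ⟨B, hBA, hB⟩
    have h2 := combCond_aux B hB
    exact ⟨genFam B, h2.1, h2.2.1, h2.2.2.1, h2.1.1 h2.2.2.2 hBA⟩
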